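/- Let w_0,...,w_n and d_0,...,d_m be positive integers with Σ_j d_j ≤ Σ_i w_i, and let f be a rational number. Suppose there is a subset {0,…,l} of the index set {0,…,m} and a relabeling such that: for j ≤ l, f·d_j ≡ f·w_j (mod ℤ) and f·d_j ∉ ℤ; and for j > l, f·d_j ∈ ℤ. Let I = {i : f·w_i ∈ ℤ} with {0,…,l} ∩ I = ∅. Then Σ_{j=0}^m ⌈f·d_j⌉ - Σ_{i=0}^n ⌈f·w_i⌉ ≤ f·(Σ_j d_j - Σ_i w_i). -/

import Mathlib

/-- Arithmetic heart of Lemma 6.1(1): with the relabelled index structure of a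
quasismooth complete intersection, Σⱼ⌈f·dⱼ⌉ - Σᵢ⌈f·wᵢ⌉ ≤ f·(Σdⱼ - Σwᵢ). -/
theorem stmt6 (n m l : ℕ) (w : Fin (n + 1) → ℕ) (d : Fin (m + 1) → ℕ)
    (hw : ∀ i, 0 < w i) (hd : ∀ j, 0 < d j)
    (hk : (∑ j, d j) ≤ ∑ i, w i)
    (hlm : l ≤ m) (hln : l ≤ n) (f : ℚ)
    (h1 : ∀ j : ℕ, (hj : j ≤ l) →
      (∃ t : ℤ, f * (d ⟨j, by omega⟩ : ℚ) - f * (w ⟨j, by omega⟩ : ℚ) = (t : ℚ)) ∧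
      ¬ ∃ t : ℤ, f * (d ⟨j, by omega⟩ : ℚ) = (t : ℚ))
    (h2 : ∀ j : Fin (m + 1), l < (j : ℕ) → ∃ t : ℤ, f * (d j : ℚ) = (t : ℚ))
    (h3 : ∀ i : Fin (n + 1), (i : ℕ) ≤ l → ¬ ∃ t : ℤ, f * (w i : ℚ) = (t : ℚ)) :
    ((∑ j, ⌈f * (d j : ℚ)⌉ : ℤ) : ℚ) - ((∑ i, ⌈f * (w i : ℚ)⌉ : ℤ) : ℚ)
      ≤ f * ((∑ j, (d j : ℚ)) - ∑ i, (w i : ℚ)) := by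
  set c : ℚ → ℚ := fun x => (⌈x⌉ : ℚ) - x with hc
  have hc0 : ∀ x, 0 ≤ c x := by
    intro x
    simp only [hc, sub_nonneg]
    exact Int.le_ceil x
  have hcint : ∀ x : ℚ, (∃ t : ℤ, x = (t : ℚ)) → c x = 0 := by
    rintro x ⟨t, rfl⟩; simp [hc]
  have hceq : ∀ x y : ℚ, (∃ t : ℤ, x - y = (t : ℚ)) → c x = c y := by
    rintro x y ⟨t, ht⟩
    have hx : x = y + (t : ℚ) := by linarith
    subst hx
    simp only [hc, Int.ceil_add_intCast]
    push_cast
    ring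
  set Dq : ℕ → ℚ := fun j => if h : j < m + 1 then (d ⟨j, h⟩ : ℚ) else 0 with hDq
  set Wq : ℕ → ℚ := fun i => if h : i < n + 1 then (w ⟨i, h⟩ : ℚ) else 0 with hWq
  have hA : (∑ j, c (f * (d j : ℚ))) = ∑ j ∈ Finset.range (m + 1), c (f * Dq j) := by
    rw [← Fin.sum_univ_eq_sum_range]
    exact Finset.sum_congr rfl fun j _ => by simp [hDq, j.isLt, Nat.le_of_lt_succ j.isLt]
  have hB : (∑ i, c (f * (w i : ℚ))) = ∑ i ∈ Finset.range (n + 1), c (f * Wq i) := by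
    rw [← Fin.sum_univ_eq_sum_range]
    exact Finset.sum_congr rfl fun i _ => by simp [hWq, i.isLt, Nat.le_of_lt_succ i.isLt]
  have hAl : (∑ j ∈ Finset.range (m + 1), c (f * Dq j))
      = ∑ j ∈ Finset.range (l + 1), c (f * Dq j) := by
    symm
    apply Finset.sum_subset (Finset.range_subset_range.2 (by omega))
    intro j hj hjl
    simp only [Finset.mem_range] at hj hjl
    apply hcint
    have := h2 ⟨j, hj⟩ (by simp only [Fin.val_mk]; omega)
    simpa [hDq, hj, Nat.le_of_lt_succ hj] using this
  have hterm : ∀ j ∈ Finset.range (l + 1), c (f * Dq j) = c (f * Wq j) := by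
    intro j hj
    simp only [Finset.mem_range] at hj
    have hjl : j ≤ l := by omega
    obtain ⟨⟨t, ht⟩, -⟩ := h1 j hjl
    apply hceq
    refine ⟨t, ?_⟩
    have hdm : j < m + 1 := by omega
    have hwn : j < n + 1 := by omega
    simpa [hDq, hWq, hdm, hwn, Nat.le_of_lt_succ hdm, Nat.le_of_lt_succ hwn] using ht
  have hBl : (∑ i ∈ Finset.range (l + 1), c (f * Wq i))
      ≤ ∑ i ∈ Finset.range (n + 1), c (f * Wq i) :=
    Finset.sum_le_sum_of_subset_of_nonneg (Finset.range_subset_range.2 (by omega))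
      (fun i _ _ => hc0 _)
  have key : (∑ j, c (f * (d j : ℚ))) ≤ ∑ i, c (f * (w i : ℚ)) := by
    rw [hA, hB, hAl, Finset.sum_congr rfl hterm]
    exact hBl
  have eA : ((∑ j, ⌈f * (d j : ℚ)⌉ : ℤ) : ℚ)
      = (∑ j, c (f * (d j : ℚ))) + ∑ j, f * (d j : ℚ) := by
    rw [← Finset.sum_add_distrib]
    push_cast
    exact Finset.sum_congr rfl fun j _ => by simp [hc]
  have eB : ((∑ i, ⌈f * (w i : ℚ)⌉ : ℤ) : ℚ)
      = (∑ i, c (f * (w i : ℚ))) + ∑ i, f * (w i : ℚ) := by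
    rw [← Finset.sum_add_distrib]
    push_cast
    exact Finset.sum_congr rfl fun i _ => by simp [hc]
  have eR : f * ((∑ j, (d j : ℚ)) - ∑ i, (w i : ℚ))
      = (∑ j, f * (d j : ℚ)) - ∑ i, f * (w i : ℚ) := by
    rw [mul_sub, Finset.mul_sum, Finset.mul_sum]
  rw [eA, eB, eR]
  linarith [key]
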